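/- Let C_1, C_2 be linear codes in F_q^N of dimensions k, l with dim(C_1 ∩ C_2) = s. Then the 2-tuple Hamming weight enumerator decomposes as W^{[2]}_{C_1,C_2}(X,Y) = X^N + (q-1)(W^{(1)}_{C_1}(X,Y) + W^{(1)}_{C_2}(X,Y)) + (q-1)^2 W^{(1)}_{C_1∩C_2}(X,Y) + (q^2-1)(q^2-q) W^{(2)}_{C_1∩C_2}(X,Y) + q(q-1)^2 (W^{(2)}_{C_1\setminus C_2}(X,Y) + W^{(2)}_{C_2\setminus C_1}(X,Y)) + (q-1)^2 W^{(2)}_{⟨C_1,C_2⟩\setminus(C_1∪C_2)}(X,Y). -/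

import Mathlib

open Finset
open scoped Classical BigOperators

variable {Fq : Type} [Field Fq] [Fintype Fq]

noncomputable def wt {N : ℕ} (c : Fin N → Fq) : ℕ := (Finset.univ.filter fun j => c j ≠ 0).card

def dualCode {N : ℕ} (C : Submodule Fq (Fin N → Fq)) : Submodule Fq (Fin N → Fq) where
  carrier := {v | ∀ u ∈ C, ∑ j, u j * v j = 0}
  add_mem' := by
    intro a b ha hb u hu
    have h1 := ha u hu
    have h2 := hb u hu
    have : ∀ j, u j * (a + b) j = u j * a j + u j * b j := fun j => by
      simp [Pi.add_apply, mul_add]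
    simp only [Set.mem_setOf_eq, this, Finset.sum_add_distrib, h1, h2, add_zero]
  zero_mem' := by intro u hu; simp
  smul_mem' := by
    intro r v hv u hu
    have h := hv u hu
    have : ∀ j, u j * (r • v) j = r * (u j * v j) := fun j => by
      simp [Pi.smul_apply, smul_eq_mul]; ring
    simp only [Set.mem_setOf_eq, this, ← Finset.mul_sum, h, mul_zero]

noncomputable def W {N : ℕ} (C : Submodule Fq (Fin N → Fq)) (X Y : ℂ) : ℂ :=
  ∑ c : C, X ^ (N - wt (c : Fin N → Fq)) * Y ^ wt (c : Fin N → Fq)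

noncomputable def effLen {N m : ℕ} (c : Fin m → Fin N → Fq) : ℕ :=
  (Finset.univ.filter fun j => ∃ i, c i j ≠ 0).card

noncomputable def Wm {N m : ℕ} (Cs : Fin m → Submodule Fq (Fin N → Fq)) (X Y : ℂ) : ℂ :=
  ∑ c : (Π i, Cs i), X ^ (N - effLen fun i => (c i : Fin N → Fq)) *
    Y ^ effLen (fun i => (c i : Fin N → Fq))

noncomputable def suppWt {N : ℕ} (V : Submodule Fq (Fin N → Fq)) : ℕ :=
  (Finset.univ.filter fun j => ∃ v ∈ V, v j ≠ 0).card

noncomputable def Wr {N : ℕ} (C : Submodule Fq (Fin N → Fq)) (r : ℕ) (X Y : ℂ) : ℂ :=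
  ∑ᶠ D ∈ {D : Submodule Fq (Fin N → Fq) | D ≤ C ∧ Module.finrank Fq D = r},
    X ^ (N - suppWt D) * Y ^ suppWt D


open Module Submodule

noncomputable instance : Fintype (Submodule Fq (Fin N → Fq)) :=
  @Fintype.ofFinite _ (Finite.of_injective (fun W => (W : Set (Fin N → Fq))) SetLike.coe_injective)

noncomputable def TT (W : Submodule Fq (Fin N → Fq)) : Finset (Fin N → Fq) :=
  Finset.univ.filter (· ∈ W)

lemma mem_TT {W : Submodule Fq (Fin N → Fq)} {x : Fin N → Fq} : x ∈ TT W ↔ x ∈ W := by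
  simp [TT]

lemma card_TT (W : Submodule Fq (Fin N → Fq)) :
    (TT W).card = Fintype.card Fq ^ finrank Fq W := by
  rw [TT, ← Fintype.card_subtype]; exact card_eq_pow_finrank

lemma mem_span_pair_left (a b : Fin N → Fq) : a ∈ span Fq {a, b} :=
  Submodule.subset_span (by simp)

lemma mem_span_pair_right (a b : Fin N → Fq) : b ∈ span Fq {a, b} :=
  Submodule.subset_span (by simp)

lemma span_pair_le_iff {a b : Fin N → Fq} {D : Submodule Fq (Fin N → Fq)} :
    span Fq {a, b} ≤ D ↔ a ∈ D ∧ b ∈ D := by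
  rw [Submodule.span_le, Set.insert_subset_iff, Set.singleton_subset_iff]; rfl

lemma span_pair_eq_bot_iff {a b : Fin N → Fq} :
    span Fq {a, b} = ⊥ ↔ a = 0 ∧ b = 0 := by
  simp [Submodule.span_eq_bot]

lemma finrank_span_pair_le (a b : Fin N → Fq) : finrank Fq (span Fq {a, b}) ≤ 2 := by
  refine (finrank_span_le_card (R := Fq) ({a, b} : Set (Fin N → Fq))).trans ?_
  rw [Set.toFinset_insert, Set.toFinset_singleton]
  exact (Finset.card_insert_le _ _).trans (by simp)

lemma span_pair_eq_iff_rank1 {D : Submodule Fq (Fin N → Fq)} (hD : finrank Fq D = 1)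
    {a b : Fin N → Fq} :
    span Fq {a, b} = D ↔ a ∈ D ∧ b ∈ D ∧ ¬(a = 0 ∧ b = 0) := by
  constructor
  · rintro rfl
    refine ⟨mem_span_pair_left a b, mem_span_pair_right a b, ?_⟩
    rintro ⟨rfl, rfl⟩
    rw [show ({(0:Fin N → Fq), 0} : Set (Fin N → Fq)) = {0} by simp,
      Submodule.span_zero_singleton] at hD
    simp at hD
  · rintro ⟨ha, hb, hab⟩
    refine Submodule.eq_of_le_of_finrank_le (span_pair_le_iff.mpr ⟨ha, hb⟩) ?_
    rw [hD, Nat.one_le_iff_ne_zero]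
    intro h0
    rw [Submodule.finrank_eq_zero, span_pair_eq_bot_iff] at h0
    exact hab h0

lemma span_pair_eq_iff_rank2 {D : Submodule Fq (Fin N → Fq)} (hD : finrank Fq D = 2)
    {a : Fin N → Fq} (haD : a ∈ D) (ha : a ≠ 0) (b : Fin N → Fq) :
    span Fq {a, b} = D ↔ b ∈ D ∧ b ∉ span Fq {a} := by
  constructor
  · rintro rfl
    refine ⟨mem_span_pair_right a b, ?_⟩
    intro hb
    have hle : span Fq {a, b} ≤ span Fq {a} :=
      span_pair_le_iff.mpr ⟨Submodule.mem_span_singleton_self a, hb⟩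
    have h1 := Submodule.finrank_mono hle
    rw [hD, finrank_span_singleton ha] at h1
    omega
  · rintro ⟨hbD, hb⟩
    refine Submodule.eq_of_le_of_finrank_le (span_pair_le_iff.mpr ⟨haD, hbD⟩) ?_
    rw [hD]
    have h1 : span Fq {a} < span Fq {a, b} := by
      refine lt_of_le_of_ne (Submodule.span_mono (by simp)) ?_
      intro h
      exact hb (h ▸ mem_span_pair_right a b)
    have h2 := finrank_lt_finrank_of_lt h1
    rw [finrank_span_singleton ha] at h2
    omega

-- rank of intersection of a line with a submodule
lemma finrank_line_inf {a : Fin N → Fq} (ha : a ≠ 0) (W : Submodule Fq (Fin N → Fq)) :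
    finrank Fq (span Fq {a} ⊓ W : Submodule Fq (Fin N → Fq))
      = if a ∈ W then 1 else 0 := by
  split_ifs with h
  · rw [inf_eq_left.mpr (by rwa [Submodule.span_singleton_le_iff_mem]), finrank_span_singleton ha]
  · by_contra hne
    have hle : span Fq {a} ⊓ W ≤ span Fq {a} := inf_le_left
    have h1 := Submodule.finrank_mono hle
    rw [finrank_span_singleton ha] at h1
    have h2 : finrank Fq (span Fq {a} ⊓ W : Submodule Fq (Fin N → Fq)) = 1 := by omega
    have := Submodule.eq_of_le_of_finrank_le hle (by rw [finrank_span_singleton ha, h2])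
    apply h
    have hmem : a ∈ span Fq {a} ⊓ W := by
      rw [this]; exact Submodule.mem_span_singleton_self a
    exact hmem.2

-- D ≤ W iff finrank (D ⊓ W) = finrank D
lemma le_iff_finrank_inf {D W : Submodule Fq (Fin N → Fq)} {r : ℕ} (hD : finrank Fq D = r) :
    D ≤ W ↔ finrank Fq (D ⊓ W : Submodule Fq (Fin N → Fq)) = r := by
  constructor
  · intro h; rw [inf_eq_left.mpr h, hD]
  · intro h
    have : D ⊓ W = D := Submodule.eq_of_le_of_finrank_le inf_le_left (by rw [hD, h])
    rw [← this]; exact inf_le_right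

noncomputable def nn (C1 C2 D : Submodule Fq (Fin N → Fq)) : ℕ :=
  ((TT C1 ×ˢ TT C2).filter fun p => span Fq {p.1, p.2} = D).card

lemma nn_bot (C1 C2 : Submodule Fq (Fin N → Fq)) : nn C1 C2 ⊥ = 1 := by
  rw [nn]
  convert Finset.card_singleton ((0 : Fin N → Fq), (0 : Fin N → Fq))
  ext ⟨a, b⟩
  simp only [Finset.mem_filter, Finset.mem_product, mem_TT, Finset.mem_singleton,
    span_pair_eq_bot_iff, Prod.mk.injEq]
  constructor
  · rintro ⟨-, h⟩; exact h
  · rintro ⟨rfl, rfl⟩; exact ⟨⟨zero_mem _, zero_mem _⟩, rfl, rfl⟩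

lemma nn_big (C1 C2 D : Submodule Fq (Fin N → Fq)) (h : 3 ≤ finrank Fq D) :
    nn C1 C2 D = 0 := by
  rw [nn, Finset.card_eq_zero, Finset.filter_eq_empty_iff]
  rintro ⟨a, b⟩ _ hsp
  have := finrank_span_pair_le (Fq := Fq) a b
  rw [hsp] at this; omega

lemma nn_rank1 (C1 C2 D : Submodule Fq (Fin N → Fq)) (h : finrank Fq D = 1) :
    nn C1 C2 D = Fintype.card Fq ^ finrank Fq (D ⊓ C1 : Submodule Fq (Fin N → Fq)) *
      Fintype.card Fq ^ finrank Fq (D ⊓ C2 : Submodule Fq (Fin N → Fq)) - 1 := by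
  have hset : ((TT C1 ×ˢ TT C2).filter fun p => span Fq {p.1, p.2} = D)
      = (TT (D ⊓ C1) ×ˢ TT (D ⊓ C2)).erase (0, 0) := by
    ext ⟨a, b⟩
    simp only [Finset.mem_filter, Finset.mem_product, mem_TT, Finset.mem_erase,
      span_pair_eq_iff_rank1 h, Submodule.mem_inf, ne_eq, Prod.mk.injEq, not_and]
    tauto
  rw [nn, hset, Finset.card_erase_of_mem (by simp [Finset.mem_product, mem_TT]),
    Finset.card_product, card_TT, card_TT]

lemma nn_rank2 (C1 C2 D : Submodule Fq (Fin N → Fq)) (h : finrank Fq D = 2) :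
    nn C1 C2 D =
      (Fintype.card Fq ^ finrank Fq (D ⊓ (C1 ⊓ C2) : Submodule Fq (Fin N → Fq)) - 1) *
        (Fintype.card Fq ^ finrank Fq (D ⊓ C2 : Submodule Fq (Fin N → Fq)) - Fintype.card Fq)
      + ((Fintype.card Fq ^ finrank Fq (D ⊓ C1 : Submodule Fq (Fin N → Fq)) - 1) -
          (Fintype.card Fq ^ finrank Fq (D ⊓ (C1 ⊓ C2) : Submodule Fq (Fin N → Fq)) - 1)) *
        (Fintype.card Fq ^ finrank Fq (D ⊓ C2 : Submodule Fq (Fin N → Fq)) - 1) := by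
  classical
  set q := Fintype.card Fq with hq
  -- count fiberwise over a
  have hcnt : nn C1 C2 D = ∑ a ∈ TT C1,
      ((TT C2).filter fun b => span Fq {a, b} = D).card := by
    rw [nn, Finset.card_filter, Finset.sum_product]
    exact Finset.sum_congr rfl fun a _ => (Finset.card_filter _ _).symm
  -- value of inner count
  have hinner : ∀ a ∈ TT C1, a ∈ D → a ≠ 0 →
      ((TT C2).filter fun b => span Fq {a, b} = D).card
        = q ^ finrank Fq (D ⊓ C2 : Submodule Fq (Fin N → Fq)) -
          q ^ finrank Fq (span Fq {a} ⊓ C2 : Submodule Fq (Fin N → Fq)) := by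
    intro a _ haD ha0
    have hset : ((TT C2).filter fun b => span Fq {a, b} = D)
        = TT (D ⊓ C2) \ TT (span Fq {a} ⊓ C2) := by
      ext b
      simp only [Finset.mem_filter, mem_TT, Finset.mem_sdiff, Submodule.mem_inf,
        span_pair_eq_iff_rank2 h haD ha0]
      constructor
      · rintro ⟨hb2, hbD, hbs⟩
        exact ⟨⟨hbD, hb2⟩, fun hc => hbs hc.1⟩
      · rintro ⟨⟨hbD, hb2⟩, hbs⟩
        exact ⟨hb2, hbD, fun hc => hbs ⟨hc, hb2⟩⟩
    rw [hset, Finset.card_sdiff_of_subset, card_TT, card_TT]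
    · intro x hx
      rw [mem_TT] at hx ⊢
      refine ⟨?_, hx.2⟩
      have : span Fq {a} ≤ D := by rwa [Submodule.span_singleton_le_iff_mem]
      exact this hx.1
  -- zero cases
  have hzero : ∀ a ∈ TT C1, ¬(a ∈ D ∧ a ≠ 0) →
      ((TT C2).filter fun b => span Fq {a, b} = D).card = 0 := by
    intro a _ hcond
    rw [Finset.card_eq_zero, Finset.filter_eq_empty_iff]
    intro b _ hsp
    apply hcond
    constructor
    · rw [← hsp]; exact mem_span_pair_left a b
    · rintro rfl
      have : span Fq ({(0 : Fin N → Fq), b} : Set (Fin N → Fq)) = span Fq {b} := by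
        rw [show ({(0 : Fin N → Fq), b} : Set (Fin N → Fq)) = insert 0 {b} from rfl,
          Submodule.span_insert_zero]
      rw [this] at hsp
      rcases eq_or_ne b 0 with rfl | hb
      · rw [Submodule.span_zero_singleton] at hsp
        rw [← hsp] at h; simp at h
      · have := finrank_span_singleton (K := Fq) hb
        rw [hsp, h] at this; omega
  -- structural finsets
  have hA : (TT C1).filter (fun a => a ∈ D ∧ a ≠ 0) = (TT (D ⊓ C1)).erase 0 := by
    ext x
    simp only [Finset.mem_filter, mem_TT, Finset.mem_erase, Submodule.mem_inf, ne_eq]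
    tauto
  have hAC : ((TT C1).filter (fun a => a ∈ D ∧ a ≠ 0)).filter (fun a => a ∈ C2)
      = (TT (D ⊓ (C1 ⊓ C2))).erase 0 := by
    ext x
    simp only [Finset.mem_filter, mem_TT, Finset.mem_erase, Submodule.mem_inf, ne_eq]
    tauto
  set A := (TT C1).filter (fun a => a ∈ D ∧ a ≠ 0) with hAdef
  have hApos : (A.filter (fun a => a ∈ C2)).card
      = q ^ finrank Fq (D ⊓ (C1 ⊓ C2) : Submodule Fq (Fin N → Fq)) - 1 := by
    rw [hAdef, hAC, Finset.card_erase_of_mem (mem_TT.mpr (Submodule.zero_mem _)), card_TT]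
  have hAcard : A.card = q ^ finrank Fq (D ⊓ C1 : Submodule Fq (Fin N → Fq)) - 1 := by
    rw [hA, Finset.card_erase_of_mem (mem_TT.mpr (Submodule.zero_mem _)), card_TT]
  have hAneg : (A.filter (fun a => ¬ a ∈ C2)).card
      = (q ^ finrank Fq (D ⊓ C1 : Submodule Fq (Fin N → Fq)) - 1)
        - (q ^ finrank Fq (D ⊓ (C1 ⊓ C2) : Submodule Fq (Fin N → Fq)) - 1) := by
    have h1 := Finset.card_filter_add_card_filter_not (s := A)
      (p := fun a => a ∈ C2)
    omega
  have hsplit := Finset.sum_filter_add_sum_filter_not A (fun a => a ∈ C2)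
    (fun a => ((TT C2).filter fun b => span Fq {a, b} = D).card)
  have memA : ∀ a ∈ A, a ∈ TT C1 ∧ a ∈ D ∧ a ≠ 0 := by
    intro a ha
    obtain ⟨h1, h2⟩ := Finset.mem_filter.mp ha
    exact ⟨h1, h2⟩
  calc nn C1 C2 D
      = ∑ a ∈ TT C1, ((TT C2).filter fun b => span Fq {a, b} = D).card := hcnt
    _ = ∑ a ∈ A, ((TT C2).filter fun b => span Fq {a, b} = D).card :=
        (Finset.sum_subset (Finset.filter_subset _ _)
          (fun a ha hna => hzero a ha fun hc => hna (Finset.mem_filter.mpr ⟨ha, hc⟩))).symm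
    _ = ∑ a ∈ A.filter (fun a => a ∈ C2), ((TT C2).filter fun b => span Fq {a, b} = D).card
        + ∑ a ∈ A.filter (fun a => ¬ a ∈ C2),
            ((TT C2).filter fun b => span Fq {a, b} = D).card := hsplit.symm
    _ = _ := by
        have e1 : ∑ a ∈ A.filter (fun a => a ∈ C2),
            ((TT C2).filter fun b => span Fq {a, b} = D).card
            = (A.filter (fun a => a ∈ C2)).card *
              (q ^ finrank Fq (D ⊓ C2 : Submodule Fq (Fin N → Fq)) - q) := by
          rw [Finset.sum_congr rfl (fun a ha => ?_), Finset.sum_const, smul_eq_mul]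
          obtain ⟨haA, haC2⟩ := Finset.mem_filter.mp ha
          obtain ⟨haT, haD, ha0⟩ := memA a haA
          rw [hinner a haT haD ha0, finrank_line_inf ha0 C2, if_pos haC2, pow_one]
        have e2 : ∑ a ∈ A.filter (fun a => ¬ a ∈ C2),
            ((TT C2).filter fun b => span Fq {a, b} = D).card
            = (A.filter (fun a => ¬ a ∈ C2)).card *
              (q ^ finrank Fq (D ⊓ C2 : Submodule Fq (Fin N → Fq)) - 1) := by
          rw [Finset.sum_congr rfl (fun a ha => ?_), Finset.sum_const, smul_eq_mul]
          obtain ⟨haA, haC2⟩ := Finset.mem_filter.mp ha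
          obtain ⟨haT, haD, ha0⟩ := memA a haA
          rw [hinner a haT haD ha0, finrank_line_inf ha0 C2, if_neg haC2, pow_zero]
        rw [e1, e2, hApos, hAneg]

set_option maxHeartbeats 2000000 in
lemma coeff_eq (C1 C2 D : Submodule Fq (Fin N → Fq)) :
    ((nn C1 C2 D : ℕ) : ℂ)
      = (if D = ⊥ then 1 else 0)
        + ((Fintype.card Fq : ℂ) - 1) *
            ((if D ≤ C1 ∧ finrank Fq D = 1 then 1 else 0)
              + (if D ≤ C2 ∧ finrank Fq D = 1 then 1 else 0))
        + ((Fintype.card Fq : ℂ) - 1) ^ 2 * (if D ≤ C1 ⊓ C2 ∧ finrank Fq D = 1 then 1 else 0)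
        + ((Fintype.card Fq : ℂ) ^ 2 - 1) * ((Fintype.card Fq : ℂ) ^ 2 - (Fintype.card Fq : ℂ)) *
            (if D ≤ C1 ⊓ C2 ∧ finrank Fq D = 2 then 1 else 0)
        + (Fintype.card Fq : ℂ) * ((Fintype.card Fq : ℂ) - 1) ^ 2 *
            ((if D ≤ C1 ∧ finrank Fq D = 2 ∧
                finrank Fq (D ⊓ (C1 ⊓ C2) : Submodule Fq (Fin N → Fq)) = 1 then 1 else 0)
              + (if D ≤ C2 ∧ finrank Fq D = 2 ∧
                  finrank Fq (D ⊓ (C1 ⊓ C2) : Submodule Fq (Fin N → Fq)) = 1 then 1 else 0))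
        + ((Fintype.card Fq : ℂ) - 1) ^ 2 *
            (if D ≤ C1 ⊔ C2 ∧ finrank Fq D = 2 ∧ ¬ D ≤ C1 ∧ ¬ D ≤ C2 ∧
                finrank Fq (D ⊓ C1 : Submodule Fq (Fin N → Fq)) = 1 ∧
                finrank Fq (D ⊓ C2 : Submodule Fq (Fin N → Fq)) = 1 ∧ D ⊓ C1 ≠ D ⊓ C2
              then 1 else 0) := by
  have hq1 : 1 ≤ Fintype.card Fq := Fintype.card_pos
  have hq2 : Fintype.card Fq ≤ Fintype.card Fq ^ 2 := Nat.le_self_pow two_ne_zero _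
  have h12 : 1 ≤ Fintype.card Fq ^ 2 := hq1.trans hq2
  have h3 : Fintype.card Fq - 1 ≤ Fintype.card Fq ^ 2 - 1 := by omega
  by_cases hD0 : finrank Fq D = 0
  · have hbot : D = ⊥ := Submodule.finrank_eq_zero.mp hD0
    subst hbot
    rw [nn_bot]
    norm_num [finrank_bot]
  by_cases hD1 : finrank Fq D = 1
  · have hbot : ¬ (D = ⊥) := fun h => by rw [h, finrank_bot] at hD1; omega
    have hp : ∀ a b : ℕ, 1 ≤ Fintype.card Fq ^ a * Fintype.card Fq ^ b := fun a b =>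
      Nat.one_le_iff_ne_zero.mpr (by positivity)
    rw [nn_rank1 C1 C2 D hD1, Nat.cast_sub (hp _ _)]
    have hd1le : finrank Fq (D ⊓ C1 : Submodule Fq (Fin N → Fq)) ≤ 1 :=
      hD1 ▸ Submodule.finrank_mono inf_le_left
    have hd2le : finrank Fq (D ⊓ C2 : Submodule Fq (Fin N → Fq)) ≤ 1 :=
      hD1 ▸ Submodule.finrank_mono inf_le_left
    have hc1 := le_iff_finrank_inf (W := C1) hD1
    have hc2 := le_iff_finrank_inf (W := C2) hD1
    have hc3 : (D ≤ C1 ⊓ C2) ↔ (D ≤ C1 ∧ D ≤ C2) := le_inf_iff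
    have e1 : finrank Fq (D ⊓ C1 : Submodule Fq (Fin N → Fq)) = if D ≤ C1 then 1 else 0 := by
      split_ifs with h
      · exact hc1.mp h
      · have hne : ¬ finrank Fq (D ⊓ C1 : Submodule Fq (Fin N → Fq)) = 1 :=
          fun hh => h (hc1.mpr hh)
        omega
    have e2 : finrank Fq (D ⊓ C2 : Submodule Fq (Fin N → Fq)) = if D ≤ C2 then 1 else 0 := by
      split_ifs with h
      · exact hc2.mp h
      · have hne : ¬ finrank Fq (D ⊓ C2 : Submodule Fq (Fin N → Fq)) = 1 :=
          fun hh => h (hc2.mpr hh)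
        omega
    rw [e1, e2]
    by_cases h1 : D ≤ C1 <;> by_cases h2 : D ≤ C2 <;>
        simp [h1, h2, hbot, hD1, hc3] <;> push_cast <;> ring
  by_cases hD2 : finrank Fq D = 2
  · have hbot : ¬ (D = ⊥) := fun h => by rw [h, finrank_bot] at hD2; omega
    have hQ1 : ¬ (D ≤ C1 ∧ finrank Fq D = 1) := fun h => by have h2 := h.2; rw [hD2] at h2; omega
    have hQ2 : ¬ (D ≤ C2 ∧ finrank Fq D = 1) := fun h => by have h2 := h.2; rw [hD2] at h2; omega
    have hQ3 : ¬ (D ≤ C1 ⊓ C2 ∧ finrank Fq D = 1) := fun h => by have h2 := h.2; rw [hD2] at h2; omega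
    rw [nn_rank2 C1 C2 D hD2]
    -- abbreviations
    set d1 := finrank Fq (D ⊓ C1 : Submodule Fq (Fin N → Fq)) with hd1def
    set d2 := finrank Fq (D ⊓ C2 : Submodule Fq (Fin N → Fq)) with hd2def
    set e := finrank Fq (D ⊓ (C1 ⊓ C2) : Submodule Fq (Fin N → Fq)) with hedef
    have hd1le : d1 ≤ 2 := hD2 ▸ Submodule.finrank_mono inf_le_left
    have hd2le : d2 ≤ 2 := hD2 ▸ Submodule.finrank_mono inf_le_left
    have hele1 : e ≤ d1 := Submodule.finrank_mono (inf_le_inf_left D inf_le_left)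
    have hele2 : e ≤ d2 := Submodule.finrank_mono (inf_le_inf_left D inf_le_right)
    have hc1 : D ≤ C1 ↔ d1 = 2 := le_iff_finrank_inf hD2
    have hc2 : D ≤ C2 ↔ d2 = 2 := le_iff_finrank_inf hD2
    have hc12 : D ≤ C1 ⊓ C2 ↔ e = 2 := le_iff_finrank_inf hD2
    have hEinf : D ⊓ (C1 ⊓ C2) = (D ⊓ C1) ⊓ (D ⊓ C2) := by
      rw [inf_inf_distrib_left]
    have himp1 : d1 = 2 → e = d2 := by
      intro hh
      have hle : D ≤ C1 := hc1.mpr hh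
      have : D ⊓ (C1 ⊓ C2) = D ⊓ C2 := by rw [← inf_assoc, inf_eq_left.mpr hle]
      rw [hedef, this]
    have himp2 : d2 = 2 → e = d1 := by
      intro hh
      have hle : D ≤ C2 := hc2.mpr hh
      have : D ⊓ (C1 ⊓ C2) = D ⊓ C1 := by
        rw [inf_comm C1 C2, ← inf_assoc, inf_eq_left.mpr hle]
      rw [hedef, this]
    have hQ5a : (D ≤ C1 ∧ finrank Fq D = 2 ∧ e = 1) ↔ (d1 = 2 ∧ e = 1) := by
      constructor
      · rintro ⟨h, -, h2⟩; exact ⟨hc1.mp h, h2⟩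
      · rintro ⟨h, h2⟩; exact ⟨hc1.mpr h, hD2, h2⟩
    have hQ5b : (D ≤ C2 ∧ finrank Fq D = 2 ∧ e = 1) ↔ (d2 = 2 ∧ e = 1) := by
      constructor
      · rintro ⟨h, -, h2⟩; exact ⟨hc2.mp h, h2⟩
      · rintro ⟨h, h2⟩; exact ⟨hc2.mpr h, hD2, h2⟩
    have hQ4 : (D ≤ C1 ⊓ C2 ∧ finrank Fq D = 2) ↔ e = 2 := by
      constructor
      · rintro ⟨h, -⟩; exact hc12.mp h
      · intro h; exact ⟨hc12.mpr h, hD2⟩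
    have hQ6 : (D ≤ C1 ⊔ C2 ∧ finrank Fq D = 2 ∧ ¬ D ≤ C1 ∧ ¬ D ≤ C2 ∧
        d1 = 1 ∧ d2 = 1 ∧ D ⊓ C1 ≠ D ⊓ C2) ↔ (d1 = 1 ∧ d2 = 1 ∧ e = 0) := by
      constructor
      · rintro ⟨-, -, -, -, hr1, hr2, hne⟩
        refine ⟨hr1, hr2, ?_⟩
        by_contra h0
        have he1 : e = 1 := by omega
        have hE1 : D ⊓ (C1 ⊓ C2) = D ⊓ C1 :=
          (Submodule.eq_of_le_of_finrank_le (hEinf ▸ inf_le_left) (by omega)).symm.symm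
        have hE2 : D ⊓ (C1 ⊓ C2) = D ⊓ C2 :=
          Submodule.eq_of_le_of_finrank_le (hEinf ▸ inf_le_right) (by omega)
        exact hne (hE1 ▸ hE2 ▸ rfl)
      · rintro ⟨hr1, hr2, h0⟩
        have hn1 : ¬ D ≤ C1 := fun h => by rw [hc1] at h; omega
        have hn2 : ¬ D ≤ C2 := fun h => by rw [hc2] at h; omega
        have hne : D ⊓ C1 ≠ D ⊓ C2 := by
          intro heq
          have : D ⊓ (C1 ⊓ C2) = D ⊓ C1 := by rw [hEinf, heq, inf_idem]
          rw [hedef, this] at h0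
          omega
        have hsum := Submodule.finrank_sup_add_finrank_inf_eq (D ⊓ C1) (D ⊓ C2)
        rw [← hEinf] at hsum
        have hsup2 : finrank Fq ((D ⊓ C1) ⊔ (D ⊓ C2) : Submodule Fq (Fin N → Fq)) = 2 := by
          rw [← hd1def] at hsum
          omega
        have hsupD : (D ⊓ C1) ⊔ (D ⊓ C2) = D :=
          Submodule.eq_of_le_of_finrank_le (sup_le inf_le_left inf_le_left) (by omega)
        refine ⟨?_, hD2, hn1, hn2, hr1, hr2, hne⟩
        rw [← hsupD]
        exact sup_le_sup inf_le_right inf_le_right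
      -- end hQ6
    simp only [if_neg hbot, if_neg hQ1, if_neg hQ2, if_neg hQ3]
    rw [if_congr hQ4 rfl rfl, if_congr hQ5a rfl rfl, if_congr hQ5b rfl rfl,
      if_congr hQ6 rfl rfl]
    clear hc1 hc2 hc12 hQ4 hQ5a hQ5b hQ6 hQ1 hQ2 hQ3 hEinf hbot
    clear_value d1 d2 e
    have h3 : Fintype.card Fq - 1 ≤ Fintype.card Fq ^ 2 - 1 := by omega
    interval_cases d1 <;> interval_cases d2 <;> interval_cases e <;>
        (try (have hcon := himp1 rfl; omega)) <;>
        (try (have hcon := himp2 rfl; omega)) <;>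
        norm_num [Nat.sub_self] <;>
        (push_cast [Nat.cast_sub hq1, Nat.cast_sub hq2, Nat.cast_sub h12, Nat.cast_sub h3];
         ring)
  · have hD3 : 3 ≤ finrank Fq D := by omega
    rw [nn_big C1 C2 D hD3]
    have hbot : ¬ (D = ⊥) := fun h => by rw [h, finrank_bot] at hD3; omega
    have hne1 : finrank Fq D ≠ 1 := by omega
    have hne2 : finrank Fq D ≠ 2 := by omega
    simp [hbot, hne1, hne2]

lemma suppWt_bot : suppWt (⊥ : Submodule Fq (Fin N → Fq)) = 0 := by
  rw [suppWt, Finset.card_eq_zero, Finset.filter_eq_empty_iff]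
  rintro j -
  rintro ⟨v, hv, hvj⟩
  rw [Submodule.mem_bot] at hv
  subst hv; simp at hvj

lemma suppWt_span_pair (a b : Fin N → Fq) :
    suppWt (span Fq {a, b}) = (Finset.univ.filter fun j => a j ≠ 0 ∨ b j ≠ 0).card := by
  rw [suppWt]
  congr 1
  apply Finset.filter_congr
  intro j _
  constructor
  · rintro ⟨v, hv, hvj⟩
    rw [Submodule.mem_span_pair] at hv
    obtain ⟨r, s, rfl⟩ := hv
    by_contra hcon
    push_neg at hcon
    simp only [Pi.add_apply, Pi.smul_apply, smul_eq_mul, hcon.1, hcon.2, mul_zero, add_zero,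
      ne_eq, not_true_eq_false] at hvj
  · rintro (h | h)
    · exact ⟨a, mem_span_pair_left a b, h⟩
    · exact ⟨b, mem_span_pair_right a b, h⟩

lemma effLen_pair (c : Fin 2 → Fin N → Fq) :
    effLen c = suppWt (span Fq {c 0, c 1}) := by
  rw [suppWt_span_pair, effLen]
  congr 1
  apply Finset.filter_congr
  intro j _
  rw [Fin.exists_fin_two]

lemma Wm_eq_pairs (C1 C2 : Submodule Fq (Fin N → Fq)) (X Y : ℂ) :
    Wm ![C1, C2] X Y = ∑ p ∈ TT C1 ×ˢ TT C2,
      (X ^ (N - suppWt (span Fq {p.1, p.2})) * Y ^ suppWt (span Fq {p.1, p.2})) := by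
  rw [Wm]
  refine Finset.sum_bij'
    (i := fun (c : Π i, (![C1, C2] i : Submodule Fq (Fin N → Fq))) _ =>
      ((c 0 : Fin N → Fq), (c 1 : Fin N → Fq)))
    (j := fun p hp => Fin.cons ⟨p.1, mem_TT.mp (Finset.mem_product.mp hp).1⟩
      (Fin.cons ⟨p.2, mem_TT.mp (Finset.mem_product.mp hp).2⟩ (fun k => k.elim0)))
    (hi := fun c _ => Finset.mem_product.mpr ⟨mem_TT.mpr (c 0).2, mem_TT.mpr (c 1).2⟩)
    (hj := fun p hp => Finset.mem_univ _)
    (left_neg := ?_) (right_neg := ?_) (h := ?_)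
  · intro c _
    funext i
    refine Fin.cases rfl (fun k => ?_) i
    refine Fin.cases ?_ (fun k' => k'.elim0) k
    rfl
  · intro p hp
    rfl
  · intro c _
    rw [effLen_pair]

lemma finsum_cond (P : Submodule Fq (Fin N → Fq) → Prop) (f : Submodule Fq (Fin N → Fq) → ℂ) :
    (∑ᶠ D ∈ {D : Submodule Fq (Fin N → Fq) | P D}, f D)
      = ∑ D ∈ Finset.univ, if P D then f D else 0 := by
  have h : {D : Submodule Fq (Fin N → Fq) | P D} = ↑(Finset.univ.filter P) := by
    ext D; simp
  rw [h, finsum_mem_coe_finset, Finset.sum_filter]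

set_option maxHeartbeats 1000000 in
theorem two_tuple_decomposition {N k l s : ℕ}
    (C1 C2 : Submodule Fq (Fin N → Fq))
    (hk : Module.finrank Fq C1 = k) (hl : Module.finrank Fq C2 = l)
    (hs : Module.finrank Fq ↥(C1 ⊓ C2) = s) (X Y : ℂ) :
    Wm ![C1, C2] X Y
      = X ^ N
        + ((Fintype.card Fq : ℂ) - 1) * (Wr C1 1 X Y + Wr C2 1 X Y)
        + ((Fintype.card Fq : ℂ) - 1) ^ 2 * Wr (C1 ⊓ C2) 1 X Y
        + ((Fintype.card Fq : ℂ) ^ 2 - 1) * ((Fintype.card Fq : ℂ) ^ 2 - (Fintype.card Fq : ℂ)) *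
            Wr (C1 ⊓ C2) 2 X Y
        + (Fintype.card Fq : ℂ) * ((Fintype.card Fq : ℂ) - 1) ^ 2 *
            ((∑ᶠ D ∈ {D : Submodule Fq (Fin N → Fq) | D ≤ C1 ∧ Module.finrank Fq D = 2 ∧
                Module.finrank Fq ↥(D ⊓ (C1 ⊓ C2)) = 1}, X ^ (N - suppWt D) * Y ^ suppWt D)
              + ∑ᶠ D ∈ {D : Submodule Fq (Fin N → Fq) | D ≤ C2 ∧ Module.finrank Fq D = 2 ∧
                Module.finrank Fq ↥(D ⊓ (C1 ⊓ C2)) = 1}, X ^ (N - suppWt D) * Y ^ suppWt D)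
        + ((Fintype.card Fq : ℂ) - 1) ^ 2 *
            ∑ᶠ D ∈ {D : Submodule Fq (Fin N → Fq) | D ≤ C1 ⊔ C2 ∧ Module.finrank Fq D = 2 ∧
                ¬ D ≤ C1 ∧ ¬ D ≤ C2 ∧ Module.finrank Fq ↥(D ⊓ C1) = 1 ∧
                Module.finrank Fq ↥(D ⊓ C2) = 1 ∧ D ⊓ C1 ≠ D ⊓ C2},
              X ^ (N - suppWt D) * Y ^ suppWt D := by
  classical
  -- convert LHS to a sum over submodules
  rw [Wm_eq_pairs C1 C2 X Y]
  rw [← Finset.sum_fiberwise_of_maps_to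
    (g := fun p : (Fin N → Fq) × (Fin N → Fq) => Submodule.span Fq {p.1, p.2})
    (t := Finset.univ) (fun p _ => Finset.mem_univ _)
    (fun p : (Fin N → Fq) × (Fin N → Fq) =>
      X ^ (N - suppWt (Submodule.span Fq {p.1, p.2}))
        * Y ^ suppWt (Submodule.span Fq {p.1, p.2}))]
  have hL : ∀ D : Submodule Fq (Fin N → Fq),
      (∑ p ∈ (TT C1 ×ˢ TT C2).filter
          (fun p : (Fin N → Fq) × (Fin N → Fq) => Submodule.span Fq {p.1, p.2} = D),
        X ^ (N - suppWt (Submodule.span Fq {p.1, p.2}))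
          * Y ^ suppWt (Submodule.span Fq {p.1, p.2}))
      = ((nn C1 C2 D : ℕ) : ℂ) * (X ^ (N - suppWt D) * Y ^ suppWt D) := by
    intro D
    rw [Finset.sum_congr rfl (fun p hp => by rw [(Finset.mem_filter.mp hp).2]),
      Finset.sum_const, nsmul_eq_mul, nn]
  rw [Finset.sum_congr rfl (fun D _ => hL D)]
  -- convert RHS pieces
  have hbotN : (X : ℂ) ^ N
      = ∑ D ∈ Finset.univ, if D = (⊥ : Submodule Fq (Fin N → Fq)) then
          X ^ (N - suppWt D) * Y ^ suppWt D else 0 := by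
    rw [Finset.sum_ite_eq' Finset.univ (⊥ : Submodule Fq (Fin N → Fq))
      (fun D => X ^ (N - suppWt D) * Y ^ suppWt D), if_pos (Finset.mem_univ _),
      suppWt_bot, Nat.sub_zero, pow_zero, mul_one]
  rw [hbotN]
  simp only [Wr]
  have hw1 := finsum_cond (fun D : Submodule Fq (Fin N → Fq) => D ≤ C1 ∧ Module.finrank Fq D = 1)
    (fun D => X ^ (N - suppWt D) * Y ^ suppWt D)
  have hw2 := finsum_cond (fun D : Submodule Fq (Fin N → Fq) => D ≤ C2 ∧ Module.finrank Fq D = 1)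
    (fun D => X ^ (N - suppWt D) * Y ^ suppWt D)
  have hw3 := finsum_cond (fun D : Submodule Fq (Fin N → Fq) => D ≤ C1 ⊓ C2 ∧ Module.finrank Fq D = 1)
    (fun D => X ^ (N - suppWt D) * Y ^ suppWt D)
  have hw4 := finsum_cond (fun D : Submodule Fq (Fin N → Fq) => D ≤ C1 ⊓ C2 ∧ Module.finrank Fq D = 2)
    (fun D => X ^ (N - suppWt D) * Y ^ suppWt D)
  have hw5 := finsum_cond (fun D : Submodule Fq (Fin N → Fq) => D ≤ C1 ∧ Module.finrank Fq D = 2 ∧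
      Module.finrank Fq ↥(D ⊓ (C1 ⊓ C2)) = 1)
    (fun D => X ^ (N - suppWt D) * Y ^ suppWt D)
  have hw6 := finsum_cond (fun D : Submodule Fq (Fin N → Fq) => D ≤ C2 ∧ Module.finrank Fq D = 2 ∧
      Module.finrank Fq ↥(D ⊓ (C1 ⊓ C2)) = 1)
    (fun D => X ^ (N - suppWt D) * Y ^ suppWt D)
  have hw7 := finsum_cond (fun D : Submodule Fq (Fin N → Fq) => D ≤ C1 ⊔ C2 ∧ Module.finrank Fq D = 2 ∧
      ¬ D ≤ C1 ∧ ¬ D ≤ C2 ∧ Module.finrank Fq ↥(D ⊓ C1) = 1 ∧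
      Module.finrank Fq ↥(D ⊓ C2) = 1 ∧ D ⊓ C1 ≠ D ⊓ C2)
    (fun D => X ^ (N - suppWt D) * Y ^ suppWt D)
  rw [hw1, hw2, hw3, hw4, hw5, hw6, hw7]
  rw [← Finset.sum_add_distrib, ← Finset.sum_add_distrib, Finset.mul_sum, Finset.mul_sum,
    Finset.mul_sum, Finset.mul_sum, Finset.mul_sum, ← Finset.sum_add_distrib,
    ← Finset.sum_add_distrib, ← Finset.sum_add_distrib, ← Finset.sum_add_distrib,
    ← Finset.sum_add_distrib]
  refine Finset.sum_congr rfl fun D _ => ?_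
  rw [coeff_eq C1 C2 D]
  split_ifs <;> ring
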